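/- arXiv:2012.00611 — 6 statements merged into one kernel-verified Lean document; each statement's English description precedes it below -/
import Mathlib

section
/- Let H be a Hilbert space and T : H → H a bounded linear operator with ‖T‖ ≤ 1 (non-expansive). Let Π denote the orthogonal projection of H onto the closed subspace ker(I − T). Then the following are equivalent: (a) for every x ∈ H, ‖T^{k+1}x − T^{k}x‖ → 0 as k → ∞ (T is asymptotically regular); (b) for every x ∈ H, the sequence T^{k}x converges in norm to Πx as k → ∞. -/
open Filter Topology

/-- For a non-expansive bounded linear operator `T` on a Hilbert
space `H`, with `Π` the orthogonal projection onto `ker (I - T)`, asymptotic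
regularity of `T` is equivalent to norm convergence of `T^k x` to `Π x` for
every `x`. -/
theorem asymptotic_regular_iff_powers_tendsto_orthogonalProjection
    {H : Type*} [NormedAddCommGroup H] [InnerProductSpace ℂ H] [CompleteSpace H]
    (T : H →L[ℂ] H) (hT : ‖T‖ ≤ 1) :
    (∀ x : H, Tendsto (fun k : ℕ => ‖(T ^ (k + 1)) x - (T ^ k) x‖) atTop (𝓝 0)) ↔
    (∀ x : H, Tendsto (fun k : ℕ => (T ^ k) x) atTop
      (𝓝 ((Submodule.orthogonalProjectionOnto (LinearMap.ker ((1 - T : H →L[ℂ] H) : H →ₗ[ℂ] H)) x : H)))) := by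
  set K := LinearMap.ker ((1 - T : H →L[ℂ] H) : H →ₗ[ℂ] H) with hK
  have hTk : ∀ (k : ℕ) (v : H), ‖(T ^ k) v‖ ≤ ‖v‖ := by
    intro k
    induction k with
    | zero => intro v; simp
    | succ n ih =>
      intro v
      have h1 : (T ^ (n + 1)) v = (T ^ n) (T v) := by rw [pow_succ]; rfl
      rw [h1]
      refine (ih (T v)).trans ?_
      calc ‖T v‖ ≤ ‖T‖ * ‖v‖ := T.le_opNorm v
        _ ≤ 1 * ‖v‖ := by gcongr
        _ = ‖v‖ := one_mul _
  constructor
  · intro hreg x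
    set R := LinearMap.range ((1 - T : H →L[ℂ] H) : H →ₗ[ℂ] H) with hR
    -- Step A : Rᗮ ≤ K
    have hRK : Rᗮ ≤ K := by
      intro v hv
      have hAv : ContinuousLinearMap.adjoint T v = v := by
        have hz : ∀ u : H, inner ℂ u (v - ContinuousLinearMap.adjoint T v) = (0 : ℂ) := by
          intro u
          have h0 : inner ℂ ((1 - T) u) v = (0 : ℂ) := by
            have := (Submodule.mem_orthogonal R v).mp hv ((1 - T) u)
              (LinearMap.mem_range.mpr ⟨u, rfl⟩)
            exact this
          have h1 : inner ℂ u v - inner ℂ (T u) v = (0 : ℂ) := by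
            simpa [inner_sub_left] using h0
          rw [inner_sub_right, ContinuousLinearMap.adjoint_inner_right]
          linear_combination h1
        have := hz (v - ContinuousLinearMap.adjoint T v)
        rw [inner_self_eq_zero] at this
        exact (sub_eq_zero.mp this).symm
      -- now show T v = v using the norm computation
      have hinner : inner ℂ (T v) v = (inner ℂ v v : ℂ) := by
        rw [← ContinuousLinearMap.adjoint_inner_right, hAv]
      have hsq : ‖T v - v‖ ^ 2 = ‖T v‖ ^ 2 - ‖v‖ ^ 2 := by
        have := @norm_sub_sq ℂ H _ _ _ (T v) v
        rw [hinner] at this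
        rw [this]
        simp [inner_self_eq_norm_sq, ← Complex.ofReal_pow]
        ring
      have hle : ‖T v‖ ^ 2 - ‖v‖ ^ 2 ≤ 0 := by
        have h2 : ‖T v‖ ≤ ‖v‖ := by
          calc ‖T v‖ ≤ ‖T‖ * ‖v‖ := T.le_opNorm v
            _ ≤ 1 * ‖v‖ := by gcongr
            _ = ‖v‖ := one_mul _
        nlinarith [norm_nonneg (T v), norm_nonneg v]
      have : ‖T v - v‖ = 0 := by nlinarith [norm_nonneg (T v - v), sq_nonneg ‖T v - v‖]
      have hTv : T v = v := by
        have := norm_eq_zero.mp this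
        exact sub_eq_zero.mp this
      simp [hK, LinearMap.mem_ker, ContinuousLinearMap.sub_apply, hTv]
    -- decompose x
    set y := (Submodule.orthogonalProjectionOnto K x : H) with hy
    have hyK : y ∈ K := SetLike.coe_mem _
    have hfix : ∀ k : ℕ, (T ^ k) y = y := by
      have hTy : T y = y := by
        have h0 : y - T y = 0 := by
          have := LinearMap.mem_ker.mp hyK
          simpa [ContinuousLinearMap.sub_apply, sub_eq_zero] using this
        exact (sub_eq_zero.mp h0).symm
      intro k
      induction k with
      | zero => simp
      | succ n ih =>
        have h1 : (T ^ (n + 1)) y = (T ^ n) (T y) := by rw [pow_succ]; rfl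
        rw [h1, hTy, ih]
    set z := x - y with hz
    have hzKo : z ∈ Kᗮ := K.sub_starProjection_mem_orthogonal x
    -- z ∈ closure of R
    have hzcl : z ∈ closure (R : Set H) := by
      have h1 : Kᗮ ≤ Rᗮᗮ := Submodule.orthogonal_le hRK
      have h2 : Rᗮᗮ = R.topologicalClosure := Submodule.orthogonal_orthogonal_eq_closure R
      have := h1 hzKo
      rw [h2] at this
      exact this
    -- T^k w → 0 for w in range
    have hrange0 : ∀ w ∈ R, Tendsto (fun k : ℕ => (T ^ k) w) atTop (𝓝 0) := by
      intro w hw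
      obtain ⟨u, hu⟩ := LinearMap.mem_range.mp hw
      rw [tendsto_zero_iff_norm_tendsto_zero]
      have heq : ∀ k : ℕ, ‖(T ^ k) w‖ = ‖(T ^ (k + 1)) u - (T ^ k) u‖ := by
        intro k
        have : (T ^ k) w = (T ^ k) u - (T ^ (k + 1)) u := by
          have hw' : w = u - T u := by
            rw [← hu]; rfl
          have hp : (T ^ (k + 1)) u = (T ^ k) (T u) := by rw [pow_succ]; rfl
          rw [hw', map_sub, hp]
        rw [this, norm_sub_rev]
      simp only [heq]
      exact hreg u
    -- T^k z → 0
    have hz0 : Tendsto (fun k : ℕ => (T ^ k) z) atTop (𝓝 0) := by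
      rw [tendsto_zero_iff_norm_tendsto_zero]
      rw [Metric.tendsto_atTop]
      intro ε hε
      obtain ⟨w, hwR, hwz⟩ := Metric.mem_closure_iff.mp hzcl (ε / 2) (by linarith)
      have hw0 := hrange0 w hwR
      rw [tendsto_zero_iff_norm_tendsto_zero, Metric.tendsto_atTop] at hw0
      obtain ⟨N, hN⟩ := hw0 (ε / 2) (by linarith)
      refine ⟨N, fun n hn => ?_⟩
      have h1 : ‖(T ^ n) z‖ ≤ ‖(T ^ n) (z - w)‖ + ‖(T ^ n) w‖ := by
        calc ‖(T ^ n) z‖ = ‖(T ^ n) (z - w) + (T ^ n) w‖ := by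
              rw [← map_add, sub_add_cancel]
          _ ≤ ‖(T ^ n) (z - w)‖ + ‖(T ^ n) w‖ := norm_add_le _ _
      have h2 : ‖(T ^ n) (z - w)‖ ≤ ‖z - w‖ := hTk n _
      have h3 : ‖z - w‖ < ε / 2 := by rwa [← dist_eq_norm]
      have h4 := hN n hn
      simp only [dist_zero_right, norm_norm] at h4 ⊢
      linarith
    -- conclude
    have : Tendsto (fun k : ℕ => y + (T ^ k) z) atTop (𝓝 (y + 0)) :=
      tendsto_const_nhds.add hz0
    rw [add_zero] at this
    convert this using 2 with k
    rw [hz, map_sub, hfix k]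
    abel
  · intro hconv x
    have h1 : Tendsto (fun k : ℕ => (T ^ (k + 1)) x) atTop
        (𝓝 ((Submodule.orthogonalProjectionOnto K x : H))) :=
      (hconv x).comp (tendsto_add_atTop_nat 1)
    have := (h1.sub (hconv x)).norm
    rw [sub_self] at this
    simpa using this
end

section
/- Let H be a Hilbert space and T : H → H a bounded linear operator satisfying ‖(I − T)x‖² ≤ ‖x‖² − ‖Tx‖² for all x ∈ H. Then T is asymptotically regular: for every x ∈ H, ‖T^{k+1}x − T^{k}x‖ → 0 as k → ∞. -/
open Filter Topology

/-- If a bounded linear operator `T` on a Hilbert space satisfies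
`‖(I - T) x‖² ≤ ‖x‖² - ‖T x‖²` for all `x`, then `T` is asymptotically regular:
`‖T^(k+1) x - T^k x‖ → 0` for every `x`. -/
theorem asymptotically_regular_of_sq_ineq
    {H : Type*} [NormedAddCommGroup H] [InnerProductSpace ℂ H] [CompleteSpace H]
    (T : H →L[ℂ] H)
    (hT : ∀ x : H, ‖((1 : H →L[ℂ] H) - T) x‖ ^ 2 ≤ ‖x‖ ^ 2 - ‖T x‖ ^ 2) :
    ∀ x : H, Tendsto (fun k : ℕ => ‖(T ^ (k + 1)) x - (T ^ k) x‖) atTop (𝓝 0) := by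
  intro x
  set f : ℕ → ℝ := fun k => ‖(T ^ k) x‖ ^ 2 with hf
  set g : ℕ → ℝ := fun k => ‖(T ^ (k + 1)) x - (T ^ k) x‖ with hg
  have key : ∀ k, g k ^ 2 ≤ f k - f (k + 1) := by
    intro k
    have h := hT ((T ^ k) x)
    have h1 : ((1 : H →L[ℂ] H) - T) ((T ^ k) x) = (T ^ k) x - (T ^ (k + 1)) x := by
      simp [ContinuousLinearMap.sub_apply, pow_succ']
    rw [h1] at h
    have : g k = ‖(T ^ k) x - (T ^ (k + 1)) x‖ := by
      rw [hg]; simp [norm_sub_rev]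
    rw [this]
    have e : (T ^ (k + 1)) x = T ((T ^ k) x) := by rw [pow_succ']; rfl
    show _ ≤ ‖(T ^ k) x‖ ^ 2 - ‖(T ^ (k + 1)) x‖ ^ 2
    rw [e] at h ⊢; exact h
  -- f is antitone and nonneg, hence converges
  have hanti : Antitone f := antitone_nat_of_succ_le fun k => by
    have := key k
    nlinarith [sq_nonneg (g k)]
  have hbdd : BddBelow (Set.range f) :=
    ⟨0, fun y ⟨k, hk⟩ => hk ▸ sq_nonneg _⟩
  obtain ⟨L, hL⟩ : ∃ L, Tendsto f atTop (𝓝 L) :=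
    ⟨_, tendsto_atTop_ciInf hanti hbdd⟩
  have hdiff : Tendsto (fun k => f k - f (k + 1)) atTop (𝓝 0) := by
    have := hL.sub (hL.comp (tendsto_add_atTop_nat 1))
    simpa using this
  have hsq : Tendsto (fun k => g k ^ 2) atTop (𝓝 0) :=
    squeeze_zero (fun k => sq_nonneg _) key hdiff
  have : Tendsto (fun k => Real.sqrt (g k ^ 2)) atTop (𝓝 0) := by
    simpa [Function.comp_def] using (Real.continuous_sqrt.continuousAt.tendsto.comp hsq)
  have hg0 : ∀ k, 0 ≤ g k := fun k => norm_nonneg _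
  simpa [Real.sqrt_sq, abs_of_nonneg, hg0] using this
end

section
/- Let H be a Hilbert space and B : H → H a self-adjoint bounded linear operator with 0 ≤ B ≤ I. Then B is non-expansive and asymptotically regular, and consequently for every x ∈ H the powers B^{k}x converge in norm, as k → ∞, to Πx, where Π is the orthogonal projection onto ker(I − B). -/
open Filter Topology

lemma aux_re_nonneg' {H : Type*} [NormedAddCommGroup H] [InnerProductSpace ℂ H] [CompleteSpace H]
    {S : H →L[ℂ] H} (hS : (0:H→L[ℂ]H) ≤ S) (x : H) :
    0 ≤ RCLike.re (inner ℂ (S x) x) :=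
  (RCLike.nonneg_iff.mp (((ContinuousLinearMap.nonneg_iff_isPositive S).mp hS).inner_nonneg_left x)).1

lemma aux_norm_sq' {H : Type*} [NormedAddCommGroup H] [InnerProductSpace ℂ H] [CompleteSpace H]
    {S : H →L[ℂ] H} (hS : IsSelfAdjoint S) (x : H) :
    ‖S x‖ ^ 2 = RCLike.re (inner ℂ ((S ^ 2) x) x) := by
  have hsym := (ContinuousLinearMap.isSelfAdjoint_iff_isSymmetric.mp hS)
  rw [← inner_self_eq_norm_sq (𝕜 := ℂ), sq, ContinuousLinearMap.mul_apply]
  exact congrArg RCLike.re (hsym (S x) x).symm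

/-- If `B` is a self-adjoint bounded linear operator on a complex
Hilbert space with `0 ≤ B ≤ I`, then `B` is non-expansive and asymptotically
regular, and for every `x` the powers `B^k x` converge in norm to `Π x`, where
`Π` is the orthogonal projection onto `ker (I - B)`. -/
theorem powers_tendsto_orthogonalProjection_of_isPositive_le_one
    {H : Type*} [NormedAddCommGroup H] [InnerProductSpace ℂ H] [CompleteSpace H]
    (B : H →L[ℂ] H) (hB : IsSelfAdjoint B)
    (hpos : B.IsPositive) (hle : ((1 : H →L[ℂ] H) - B).IsPositive) :
    ‖B‖ ≤ 1 ∧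
    (∀ x : H, Tendsto (fun k : ℕ => ‖(B ^ (k + 1)) x - (B ^ k) x‖) atTop (𝓝 0)) ∧
    (∀ x : H, Tendsto (fun k : ℕ => (B ^ k) x) atTop
      (𝓝 ((Submodule.orthogonalProjectionOnto (LinearMap.ker (((1 : H →L[ℂ] H) - B : H →L[ℂ] H) : H →ₗ[ℂ] H)) x : H)))) := by
  have hB0 : (0 : H →L[ℂ] H) ≤ B := (ContinuousLinearMap.nonneg_iff_isPositive B).mpr hpos
  have hB1 : B ≤ 1 := (ContinuousLinearMap.le_def B 1).mpr hle
  have hnorm : ‖B‖ ≤ 1 := (CStarAlgebra.norm_le_one_iff_of_nonneg B hB0).mpr hB1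
  have hspec : ∀ t ∈ spectrum ℝ B, t ∈ Set.Icc (0:ℝ) 1 := fun t ht =>
    ⟨spectrum_nonneg_of_nonneg hB0 ht, (CFC.le_one_iff (R := ℝ) B).mp hB1 t ht⟩
  have hanti := CStarAlgebra.pow_antitone hB0 hB1
  have hS : ∀ n : ℕ, B ^ n - B ^ (n+1) = cfc (fun t : ℝ => t ^ n - t ^ (n+1)) B := by
    intro n
    rw [cfc_sub (fun t : ℝ => t ^ n) (fun t : ℝ => t ^ (n+1)) B,
      cfc_pow_id (R := ℝ) B, cfc_pow_id (R := ℝ) B]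
  have hkey : ∀ k : ℕ, (B ^ k - B ^ (k+1)) ^ 2 ≤ B ^ (2*k) - B ^ (2*k+1) := by
    intro k
    rw [← sub_nonneg, hS k, hS (2*k), ← cfc_pow (fun t : ℝ => t ^ k - t ^ (k+1)) 2 B,
      ← cfc_sub _ _ B]
    apply cfc_nonneg
    intro t ht
    obtain ⟨h0, h1⟩ := hspec t ht
    have he : (t ^ (2*k) - t ^ (2*k+1)) - (t ^ k - t ^ (k+1)) ^ 2
        = t ^ k * t ^ k * t * (1 - t) := by ring
    rw [he]
    have h2 : (0:ℝ) ≤ t ^ k * t ^ k * t := by positivity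
    exact mul_nonneg h2 (by linarith)
  -- PART 2: asymptotic regularity
  have hreg : ∀ x : H, Tendsto (fun k : ℕ => ‖(B ^ (k + 1)) x - (B ^ k) x‖) atTop (𝓝 0) := by
    intro x
    set a : ℕ → ℝ := fun k => RCLike.re (inner ℂ ((B ^ k) x) x) with ha_def
    have ha_anti : Antitone a := by
      apply antitone_nat_of_succ_le
      intro k
      have h := aux_re_nonneg' (sub_nonneg.mpr (hanti (Nat.le_succ k))) x
      simp only [ContinuousLinearMap.sub_apply, inner_sub_left, map_sub] at h
      simp only [ha_def]
      linarith
    have ha_nonneg : ∀ k, 0 ≤ a k := fun k =>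
      aux_re_nonneg' (CStarAlgebra.pow_nonneg hB0 k) x
    have ha_bdd : BddBelow (Set.range a) := ⟨0, by rintro y ⟨k, rfl⟩; exact ha_nonneg k⟩
    have hconv : Tendsto a atTop (𝓝 (⨅ k, a k)) := tendsto_atTop_ciInf ha_anti ha_bdd
    have h2k : Tendsto (fun k : ℕ => 2*k) atTop atTop :=
      Filter.tendsto_atTop_atTop.mpr fun b => ⟨b, fun n hn => by omega⟩
    have h2k1 : Tendsto (fun k : ℕ => 2*k+1) atTop atTop :=
      Filter.tendsto_atTop_atTop.mpr fun b => ⟨b, fun n hn => by omega⟩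
    have hdiff : Tendsto (fun k => a (2*k) - a (2*k+1)) atTop (𝓝 0) := by
      have := (hconv.comp h2k).sub (hconv.comp h2k1)
      simpa using this
    have hb : ∀ k : ℕ, ‖(B ^ (k+1)) x - (B ^ k) x‖ ^ 2 ≤ a (2*k) - a (2*k+1) := by
      intro k
      have hs : (B ^ (k+1)) x - (B ^ k) x = -((B ^ k - B ^ (k+1)) x) := by
        simp [ContinuousLinearMap.sub_apply]
      rw [hs, norm_neg]
      have hsa : IsSelfAdjoint (B ^ k - B ^ (k+1)) := (hB.pow k).sub (hB.pow (k+1))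
      rw [aux_norm_sq' hsa]
      have h2 := aux_re_nonneg' (sub_nonneg.mpr (hkey k)) x
      simp only [ContinuousLinearMap.sub_apply, inner_sub_left, map_sub] at h2
      simp only [ha_def]
      linarith
    have hsq : ∀ k : ℕ, ‖(B ^ (k+1)) x - (B ^ k) x‖ ≤ Real.sqrt (a (2*k) - a (2*k+1)) := by
      intro k
      rw [← Real.sqrt_sq (norm_nonneg ((B ^ (k+1)) x - (B ^ k) x))]
      exact Real.sqrt_le_sqrt (hb k)
    have hgs : Tendsto (fun k => Real.sqrt (a (2*k) - a (2*k+1))) atTop (𝓝 0) := by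
      have := (Real.continuous_sqrt.tendsto 0).comp hdiff
      simpa [Function.comp_def] using this
    exact squeeze_zero (fun k => norm_nonneg _) hsq hgs
  refine ⟨hnorm, hreg, ?_⟩
  -- PART 3
  intro x
  set K : Submodule ℂ H := LinearMap.ker (((1 : H →L[ℂ] H) - B : H →L[ℂ] H) : H →ₗ[ℂ] H) with hK_def
  have hT : IsSelfAdjoint ((1:H →L[ℂ] H) - B) := hle.isSelfAdjoint
  have hTsym := ContinuousLinearMap.isSelfAdjoint_iff_isSymmetric.mp hT
  have hKmem : ∀ u, u ∈ K ↔ B u = u := by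
    intro u
    rw [hK_def, LinearMap.mem_ker]
    constructor
    · intro h
      have : u - B u = 0 := by simpa [ContinuousLinearMap.sub_apply] using h
      rw [sub_eq_zero] at this
      exact this.symm
    · intro h
      simp [ContinuousLinearMap.sub_apply, h]
  have hcontr : ∀ (u : H) (k : ℕ), ‖(B ^ k) u‖ ≤ ‖u‖ := by
    intro u k
    induction k with
    | zero => simp
    | succ n ih =>
      rw [pow_succ', ContinuousLinearMap.mul_apply]
      calc ‖B ((B ^ n) u)‖ ≤ ‖B‖ * ‖(B ^ n) u‖ := B.le_opNorm _
        _ ≤ 1 * ‖u‖ := mul_le_mul hnorm ih (norm_nonneg _) zero_le_one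
        _ = ‖u‖ := one_mul _
  have hPfix : ∀ u, u ∈ K → ∀ k : ℕ, (B ^ k) u = u := by
    intro u hu k
    have hBu : B u = u := (hKmem u).mp hu
    induction k with
    | zero => simp
    | succ n ih => rw [pow_succ, ContinuousLinearMap.mul_apply, hBu, ih]
  have hker : K = (LinearMap.range (((1:H →L[ℂ] H) - B : H →L[ℂ] H) : H →ₗ[ℂ] H))ᗮ := by
    ext u
    rw [Submodule.mem_orthogonal, hKmem]
    constructor
    · rintro h w hw
      obtain ⟨y, rfl⟩ := LinearMap.mem_range.mp hw
      have h0 : ((1:H →L[ℂ] H) - B) u = 0 := by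
        simp [ContinuousLinearMap.sub_apply, h]
      calc (inner ℂ (((1:H →L[ℂ] H) - B) y) u)
          = inner ℂ y (((1:H →L[ℂ] H) - B) u) := hTsym y u
        _ = 0 := by rw [h0, inner_zero_right]
    · intro h
      have h1 : (inner ℂ (((1:H →L[ℂ] H) - B) u) u) = 0 :=
        h _ (LinearMap.mem_range.mpr ⟨u, rfl⟩)
      have h2 : (inner ℂ (((1:H →L[ℂ] H) - B) (((1:H →L[ℂ] H) - B) u)) u) = 0 :=
        h _ (LinearMap.mem_range.mpr ⟨_, rfl⟩)
      have h3 : (inner ℂ (((1:H →L[ℂ] H) - B) u) (((1:H →L[ℂ] H) - B) u)) = 0 :=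
        (hTsym (((1:H →L[ℂ] H) - B) u) u).symm.trans h2
      have h4 : ((1:H →L[ℂ] H) - B) u = 0 := inner_self_eq_zero.mp h3
      have : u - B u = 0 := by simpa [ContinuousLinearMap.sub_apply] using h4
      rw [sub_eq_zero] at this
      exact this.symm
  have horth : ∀ v, v ∈ Kᗮ → Tendsto (fun k : ℕ => (B ^ k) v) atTop (𝓝 0) := by
    intro v hv
    have hclos : Kᗮ = (LinearMap.range (((1:H →L[ℂ] H) - B : H →L[ℂ] H) : H →ₗ[ℂ] H)).topologicalClosure := by
      rw [hker, Submodule.orthogonal_orthogonal_eq_closure]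
    have hvmem : v ∈ closure ((LinearMap.range (((1:H →L[ℂ] H) - B : H →L[ℂ] H) : H →ₗ[ℂ] H) : Submodule ℂ H) : Set H) := by
      rw [hclos] at hv
      exact hv
    rw [Metric.tendsto_atTop]
    intro ε hε
    obtain ⟨w, hwmem, hwd⟩ := Metric.mem_closure_iff.mp hvmem (ε/2) (by linarith)
    obtain ⟨y, rfl⟩ := LinearMap.mem_range.mp hwmem
    have h0 := Metric.tendsto_atTop.mp (hreg y) (ε/2) (by linarith)
    obtain ⟨N, hN⟩ := h0
    refine ⟨N, fun n hn => ?_⟩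
    have hwy : ∀ m : ℕ, (B ^ m) (((1:H →L[ℂ] H) - B) y) = (B ^ m) y - (B ^ (m+1)) y := by
      intro m
      have : ((1:H →L[ℂ] H) - B) y = y - B y := by
        simp [ContinuousLinearMap.sub_apply]
      rw [this, map_sub, pow_succ, ContinuousLinearMap.mul_apply]
    have hsplit : (B ^ n) v = (B ^ n) (v - ((1:H →L[ℂ] H) - B) y)
        + ((B ^ n) y - (B ^ (n+1)) y) := by
      rw [← hwy n, ← map_add]
      congr 1
      abel
    have hb1 : ‖(B ^ n) (v - ((1:H →L[ℂ] H) - B) y)‖ ≤ ‖v - ((1:H →L[ℂ] H) - B) y‖ :=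
      hcontr _ n
    have hb2 : ‖(B ^ n) y - (B ^ (n+1)) y‖ < ε/2 := by
      have := hN n hn
      rw [Real.dist_eq, sub_zero] at this
      calc ‖(B ^ n) y - (B ^ (n+1)) y‖ = ‖(B ^ (n+1)) y - (B ^ n) y‖ := norm_sub_rev _ _
        _ ≤ |‖(B ^ (n+1)) y - (B ^ n) y‖| := le_abs_self _
        _ < ε/2 := this
    have hvd : ‖v - ((1:H →L[ℂ] H) - B) y‖ < ε/2 := by
      rw [← dist_eq_norm]
      exact hwd
    rw [dist_zero_right, hsplit]
    calc ‖(B ^ n) (v - ((1:H →L[ℂ] H) - B) y) + ((B ^ n) y - (B ^ (n+1)) y)‖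
        ≤ ‖(B ^ n) (v - ((1:H →L[ℂ] H) - B) y)‖ + ‖(B ^ n) y - (B ^ (n+1)) y‖ := norm_add_le _ _
      _ < ε/2 + ε/2 := by
          apply add_lt_add_of_le_of_lt (le_trans hb1 (le_of_lt hvd)) hb2
      _ = ε := by ring
  set P : H := (K.orthogonalProjectionOnto x : H) with hP_def
  have hPK : P ∈ K := Submodule.coe_mem _
  have hv : x - P ∈ Kᗮ := K.sub_starProjection_mem_orthogonal x
  have hxv := horth (x - P) hv
  have heq : (fun k : ℕ => (B ^ k) x) = fun k : ℕ => (B ^ k) (x - P) + P := by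
    funext k
    rw [map_sub, hPfix P hPK k]
    abel
  rw [heq]
  have := hxv.add_const P
  simpa using this
end

section
/- Let H be a Hilbert space, T : H → H a non-expansive, asymptotically regular bounded linear operator, and h ∈ H. Suppose φ̄ ∈ H is a fixed point of the affine map S(x) := Tx + h, i.e. φ̄ = Tφ̄ + h. Then for every initial guess φ₀ ∈ H, the iterates φ_k := S^{k}(φ₀) converge in norm to φ̄ + Π(φ₀ − φ̄), where Π is the orthogonal projection onto ker(I − T). -/
open Filter Topology

-- closure of range(T-1) contains orthogonal complement of ker(1-T)
lemma ker_orth_subset_closure_range {H : Type*} [NormedAddCommGroup H]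
    [InnerProductSpace ℂ H] [CompleteSpace H] (T : H →L[ℂ] H) (hT : ‖T‖ ≤ 1) :
    ((LinearMap.ker ((1 - T : H →L[ℂ] H) : H →ₗ[ℂ] H) : Submodule ℂ H)ᗮ : Set H) ⊆
      closure (LinearMap.range ((T : H →ₗ[ℂ] H) - 1)) := by
  have hker : (LinearMap.ker ((1 - T : H →L[ℂ] H) : H →ₗ[ℂ] H) : Submodule ℂ H) =
      LinearMap.eqLocus (T : H →ₗ[ℂ] H) 1 := by
    ext x
    rw [LinearMap.mem_ker, LinearMap.mem_eqLocus]
    simp only [ContinuousLinearMap.sub_apply, ContinuousLinearMap.one_apply,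
      ContinuousLinearMap.coe_coe, Module.End.one_apply, sub_eq_zero, eq_comm]
    rw [eq_comm, sub_eq_zero]
  have hle : (LinearMap.range ((T : H →ₗ[ℂ] H) - 1))ᗮ ≤
      LinearMap.eqLocus (T : H →ₗ[ℂ] H) 1 := by
    intro x hx
    refine eq_of_norm_le_re_inner_eq_norm_sq (𝕜 := ℂ) ?_ ?_
    · simpa using T.le_of_opNorm_le hT x
    · have : ∀ y, inner ℂ (T y) x = (inner ℂ y x : ℂ) := by
        simpa [Submodule.mem_orthogonal, inner_sub_left, sub_eq_zero] using hx
      simp [this, ← norm_sq_eq_re_inner (𝕜 := ℂ), ← Complex.ofReal_pow, Complex.ofReal_re]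
  calc ((LinearMap.ker ((1 - T : H →L[ℂ] H) : H →ₗ[ℂ] H) : Submodule ℂ H)ᗮ : Set H)
      ⊆ ((LinearMap.range ((T : H →ₗ[ℂ] H) - 1))ᗮᗮ : Set H) := by
        rw [hker]; exact Submodule.orthogonal_le hle
    _ = closure (LinearMap.range ((T : H →ₗ[ℂ] H) - 1)) := by
        rw [Submodule.orthogonal_orthogonal_eq_closure, Submodule.topologicalClosure_coe]

/-- Let `T` be a non-expansive, asymptotically regular bounded
linear operator on a Hilbert space `H`, `h ∈ H`, and let `φ̄` be a fixed point
of the affine map `S x = T x + h`. Then for every `φ₀`, the iterates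
`S^[k] φ₀` converge in norm to `φ̄ + Π (φ₀ - φ̄)`, where `Π` is the orthogonal
projection onto `ker (I - T)`. -/
theorem affine_iterates_tendsto_of_fixedPoint
    {H : Type*} [NormedAddCommGroup H] [InnerProductSpace ℂ H] [CompleteSpace H]
    (T : H →L[ℂ] H) (hT : ‖T‖ ≤ 1)
    (hreg : ∀ x : H, Tendsto (fun k : ℕ => ‖(T ^ (k + 1)) x - (T ^ k) x‖) atTop (𝓝 0))
    (h : H) (φbar : H) (hfix : φbar = T φbar + h) (φ₀ : H) :
    Tendsto (fun k : ℕ => (fun x => T x + h)^[k] φ₀) atTop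
      (𝓝 (φbar + (Submodule.orthogonalProjectionOnto (LinearMap.ker ((1 - T : H →L[ℂ] H) : H →ₗ[ℂ] H)) (φ₀ - φbar) : H))) := by
  have hTk : ∀ k : ℕ, ‖T ^ k‖ ≤ 1 := by
    intro k
    rcases Nat.eq_zero_or_pos k with rfl | hk
    · rw [pow_zero]; exact ContinuousLinearMap.norm_id_le (E := H)
    · exact (norm_pow_le' T hk).trans (pow_le_one₀ (norm_nonneg T) hT)
  set K : Submodule ℂ H := LinearMap.ker ((1 - T : H →L[ℂ] H) : H →ₗ[ℂ] H) with hK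
  set p : H := (Submodule.orthogonalProjectionOnto K (φ₀ - φbar) : H) with hp
  set q : H := (φ₀ - φbar) - p with hq
  -- the iterates in closed form
  have hiter : ∀ k : ℕ, (fun x => T x + h)^[k] φ₀ = φbar + (T ^ k) (φ₀ - φbar) := by
    intro k
    induction k with
    | zero => simp
    | succ k ih =>
      rw [Function.iterate_succ_apply', ih]
      simp only [map_add]
      rw [pow_succ']
      have : T φbar + h = φbar := hfix.symm
      simp only [ContinuousLinearMap.mul_apply]
      rw [add_right_comm, this]
  -- p is a fixed point of T, hence of all powers
  have hpK : p ∈ K := (Submodule.orthogonalProjectionOnto K (φ₀ - φbar)).2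
  have hTp : T p = p := by
    have : (1 - T) p = 0 := hpK
    have h2 : p - T p = 0 := by simpa using this
    linear_combination (norm := abel) -h2
  have hpow : ∀ k : ℕ, (T ^ k) p = p := by
    intro k
    induction k with
    | zero => simp
    | succ k ih => rw [pow_succ', ContinuousLinearMap.mul_apply, ih, hTp]
  -- q lies in the closure of the range of T - 1
  have hqc : q ∈ closure ((LinearMap.range ((T : H →ₗ[ℂ] H) - 1) : Submodule ℂ H) : Set H) := by
    apply ker_orth_subset_closure_range T hT
    exact Submodule.sub_starProjection_mem_orthogonal (K := K) (φ₀ - φbar)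
  -- T^k q → 0
  have hq0 : Tendsto (fun k : ℕ => (T ^ k) q) atTop (𝓝 0) := by
    rw [NormedAddCommGroup.tendsto_nhds_zero]
    intro ε hε
    obtain ⟨r, hrS, hrd⟩ := Metric.mem_closure_iff.mp hqc (ε / 2) (by positivity)
    obtain ⟨z, hz⟩ := hrS
    have hz' : r = T z - z := by simpa using hz.symm
    have hreg' := hreg z
    rw [Metric.tendsto_atTop] at hreg'
    obtain ⟨N, hN⟩ := hreg' (ε / 2) (by positivity)
    rw [eventually_atTop]
    refine ⟨N, fun k hk => ?_⟩
    have h1 : ‖(T ^ k) (q - r)‖ ≤ ‖q - r‖ := by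
      calc ‖(T ^ k) (q - r)‖ ≤ ‖T ^ k‖ * ‖q - r‖ := (T ^ k).le_opNorm _
        _ ≤ 1 * ‖q - r‖ := by
            exact mul_le_mul_of_nonneg_right (hTk k) (norm_nonneg _)
        _ = ‖q - r‖ := one_mul _
    have h2 : (T ^ k) r = (T ^ (k + 1)) z - (T ^ k) z := by
      rw [hz', map_sub, pow_succ, ContinuousLinearMap.mul_apply]
    have h3 : ‖(T ^ (k + 1)) z - (T ^ k) z‖ < ε / 2 := by
      have := hN k hk
      rwa [Real.dist_eq, sub_zero, abs_of_nonneg (norm_nonneg _)] at this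
    have h4 : ‖q - r‖ < ε / 2 := by rw [← dist_eq_norm]; exact hrd
    calc ‖(T ^ k) q‖ = ‖(T ^ k) (q - r) + (T ^ k) r‖ := by
          rw [← map_add, sub_add_cancel]
      _ ≤ ‖(T ^ k) (q - r)‖ + ‖(T ^ k) r‖ := norm_add_le _ _
      _ < ε / 2 + ε / 2 := add_lt_add (h1.trans_lt h4) (h2 ▸ h3)
      _ = ε := by ring
  -- conclude
  have hdecomp : ∀ k : ℕ, (T ^ k) (φ₀ - φbar) = p + (T ^ k) q := by
    intro k
    have hx : φ₀ - φbar = p + q := by rw [hq]; abel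
    rw [hx, map_add, hpow k]
  simp only [hiter, hdecomp]
  have : Tendsto (fun k : ℕ => φbar + (p + (T ^ k) q)) atTop (𝓝 (φbar + (p + 0))) :=
    tendsto_const_nhds.add (tendsto_const_nhds.add hq0)
  simpa using this
end

section
/- Let H be a Hilbert space, T : H → H a non-expansive, asymptotically regular bounded linear operator such that 1 is not an eigenvalue of T (i.e. ker(I − T) = {0}), and let h ∈ H. If the affine map S(x) := Tx + h has a fixed point φ̄ ∈ H, then for every initial guess φ₀ ∈ H the iterates φ_k := S^{k}(φ₀) converge in norm to φ̄. -/
open Filter Topology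

private lemma pow_apply_norm_le {H : Type*} [NormedAddCommGroup H] [InnerProductSpace ℂ H]
    (T : H →L[ℂ] H) (hT : ‖T‖ ≤ 1) (k : ℕ) : ∀ x : H, ‖(T ^ k) x‖ ≤ ‖x‖ := by
  induction k with
  | zero => intro x; simp
  | succ n ih =>
    intro x
    have hx : (T ^ (n + 1)) x = (T ^ n) (T x) := by rw [pow_succ]; rfl
    rw [hx]
    calc ‖(T ^ n) (T x)‖ ≤ ‖T x‖ := ih (T x)
      _ ≤ ‖T‖ * ‖x‖ := T.le_opNorm x
      _ ≤ 1 * ‖x‖ := by gcongr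
      _ = ‖x‖ := one_mul _

private lemma pow_tendsto_zero {H : Type*} [NormedAddCommGroup H] [InnerProductSpace ℂ H]
    [CompleteSpace H]
    (T : H →L[ℂ] H) (hT : ‖T‖ ≤ 1)
    (hreg : ∀ x : H, Tendsto (fun k : ℕ => ‖(T ^ (k + 1)) x - (T ^ k) x‖) atTop (𝓝 0))
    (hker : LinearMap.ker (((1 : H →L[ℂ] H) - T) : H →ₗ[ℂ] H) = ⊥)
    (x : H) : Tendsto (fun k : ℕ => (T ^ k) x) atTop (𝓝 0) := by
  -- the range of (1 - T) is dense
  set K : Submodule ℂ H := LinearMap.range (((1 : H →L[ℂ] H) - T) : H →ₗ[ℂ] H) with hK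
  have hdense : K.topologicalClosure = ⊤ := by
    rw [Submodule.topologicalClosure_eq_top_iff]
    rw [Submodule.eq_bot_iff]
    intro v hv
    -- v is orthogonal to all (1 - T) z, so adjoint T v = v
    have hadj : ContinuousLinearMap.adjoint T v = v := by
      have hz : ∀ z : H, (inner ℂ z (v - ContinuousLinearMap.adjoint T v) : ℂ) = 0 := by
        intro z
        have := (Submodule.mem_orthogonal K v).mp hv (((1 : H →L[ℂ] H) - T) z)
          (LinearMap.mem_range_self _ z)
        have h1 : (inner ℂ (z - T z) v : ℂ) = 0 := by
          simpa [ContinuousLinearMap.sub_apply, inner_sub_left] using this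
        have h2 : (inner ℂ (T z) v : ℂ) = inner ℂ z (ContinuousLinearMap.adjoint T v) :=
          (ContinuousLinearMap.adjoint_inner_right T z v).symm
        rw [inner_sub_right, ← h2, ← inner_sub_left]
        exact h1
      have := hz (v - ContinuousLinearMap.adjoint T v)
      rw [inner_self_eq_zero] at this
      exact (sub_eq_zero.mp this).symm
    -- then T v = v by the contraction argument
    have hTv : T v = v := by
      have hsq : ‖T v - v‖ ^ 2 ≤ 0 := by
        have hn : ‖T v‖ ≤ ‖v‖ := by
          calc ‖T v‖ ≤ ‖T‖ * ‖v‖ := T.le_opNorm v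
            _ ≤ 1 * ‖v‖ := by gcongr
            _ = ‖v‖ := one_mul _
        have hin : (inner ℂ (T v) v : ℂ) = (‖v‖ : ℂ) ^ 2 := by
          rw [← ContinuousLinearMap.adjoint_inner_right, hadj]
          exact_mod_cast inner_self_eq_norm_sq_to_K (𝕜 := ℂ) v
        have hre : RCLike.re (inner ℂ (T v) v : ℂ) = ‖v‖ ^ 2 := by
          rw [hin]; norm_cast
        calc ‖T v - v‖ ^ 2
            = ‖T v‖ ^ 2 - 2 * RCLike.re (inner ℂ (T v) v : ℂ) + ‖v‖ ^ 2 := norm_sub_sq _ _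
          _ = ‖T v‖ ^ 2 - 2 * ‖v‖ ^ 2 + ‖v‖ ^ 2 := by rw [hre]
          _ ≤ ‖v‖ ^ 2 - 2 * ‖v‖ ^ 2 + ‖v‖ ^ 2 := by gcongr
          _ = 0 := by ring
      have := pow_le_pow_left₀ (norm_nonneg (T v - v)) (le_refl ‖T v - v‖)
      have h0 : ‖T v - v‖ = 0 := by nlinarith [norm_nonneg (T v - v), sq_nonneg ‖T v - v‖]
      have := norm_eq_zero.mp h0
      exact sub_eq_zero.mp this
    have : v ∈ LinearMap.ker (((1 : H →L[ℂ] H) - T) : H →ₗ[ℂ] H) := by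
      simp [LinearMap.mem_ker, ContinuousLinearMap.sub_apply, hTv]
    rw [hker] at this
    simpa using this
  -- convergence to 0 on the range of (1 - T)
  have hrange : ∀ z : H, Tendsto (fun k : ℕ => (T ^ k) (((1 : H →L[ℂ] H) - T) z))
      atTop (𝓝 0) := by
    intro z
    have heq : ∀ k : ℕ, (T ^ k) (((1 : H →L[ℂ] H) - T) z) = (T ^ k) z - (T ^ (k + 1)) z := by
      intro k
      have : (T ^ (k + 1)) z = (T ^ k) (T z) := by rw [pow_succ]; rfl
      simp [ContinuousLinearMap.sub_apply, this]
    rw [tendsto_zero_iff_norm_tendsto_zero]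
    have : (fun k : ℕ => ‖(T ^ k) (((1 : H →L[ℂ] H) - T) z)‖)
        = fun k : ℕ => ‖(T ^ (k + 1)) z - (T ^ k) z‖ := by
      funext k; rw [heq k, norm_sub_rev]
    rw [this]
    exact hreg z
  -- density + uniform bound
  rw [Metric.tendsto_atTop]
  intro ε hε
  have hx : x ∈ closure (K : Set H) := by
    have : x ∈ K.topologicalClosure := hdense ▸ Submodule.mem_top
    exact this
  obtain ⟨y, hyK, hxy⟩ := Metric.mem_closure_iff.mp hx (ε / 2) (by linarith)
  obtain ⟨z, hz⟩ := hyK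
  have hy0 : Tendsto (fun k : ℕ => (T ^ k) y) atTop (𝓝 0) := hz ▸ hrange z
  rw [Metric.tendsto_atTop] at hy0
  obtain ⟨N, hN⟩ := hy0 (ε / 2) (by linarith)
  refine ⟨N, fun k hk => ?_⟩
  have h1 : ‖(T ^ k) y‖ < ε / 2 := by
    have := hN k hk
    simpa [dist_eq_norm] using this
  have h2 : ‖(T ^ k) (x - y)‖ ≤ ‖x - y‖ := pow_apply_norm_le T hT k _
  have h3 : ‖x - y‖ < ε / 2 := by
    have : dist x y = ‖x - y‖ := dist_eq_norm x y
    linarith [this ▸ hxy]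
  have : (T ^ k) x = (T ^ k) y + (T ^ k) (x - y) := by
    rw [← map_add]; congr 1; abel
  rw [dist_eq_norm, sub_zero, this]
  calc ‖(T ^ k) y + (T ^ k) (x - y)‖ ≤ ‖(T ^ k) y‖ + ‖(T ^ k) (x - y)‖ := norm_add_le _ _
    _ < ε / 2 + ε / 2 := by have := lt_of_le_of_lt h2 h3; linarith
    _ = ε := by ring

/-- Let `T` be a non-expansive, asymptotically regular bounded
linear operator on a Hilbert space `H` such that `1` is not an eigenvalue of
`T` (i.e. `ker (I - T) = {0}`), and `h ∈ H`. If the affine map `S x = T x + h`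
has a fixed point `φ̄`, then for every `φ₀` the iterates `S^[k] φ₀` converge in
norm to `φ̄`. -/
theorem affine_iterates_tendsto_fixedPoint_of_ker_eq_bot
    {H : Type*} [NormedAddCommGroup H] [InnerProductSpace ℂ H] [CompleteSpace H]
    (T : H →L[ℂ] H) (hT : ‖T‖ ≤ 1)
    (hreg : ∀ x : H, Tendsto (fun k : ℕ => ‖(T ^ (k + 1)) x - (T ^ k) x‖) atTop (𝓝 0))
    (hker : LinearMap.ker (((1 : H →L[ℂ] H) - T) : H →ₗ[ℂ] H) = ⊥)
    (h : H) (φbar : H) (hfix : φbar = T φbar + h) (φ₀ : H) :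
    Tendsto (fun k : ℕ => (fun x => T x + h)^[k] φ₀) atTop (𝓝 φbar) := by
  have key : ∀ k : ℕ, (fun x => T x + h)^[k] φ₀ = (T ^ k) (φ₀ - φbar) + φbar := by
    intro k
    induction k with
    | zero => simp
    | succ n ih =>
      rw [Function.iterate_succ_apply', ih]
      have : (T ^ (n + 1)) (φ₀ - φbar) = T ((T ^ n) (φ₀ - φbar)) := by
        rw [pow_succ']; rfl
      rw [this]
      rw [map_add, add_assoc, ← hfix]
  simp only [key]
  have h0 : Tendsto (fun k : ℕ => (T ^ k) (φ₀ - φbar)) atTop (𝓝 0) :=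
    pow_tendsto_zero T hT hreg hker _
  have := h0.add_const φbar
  simpa using this
end

section
/- Let H be a complex Hilbert space, A : H → H a self-adjoint bounded linear operator, and let T > 0. Assume that for every integer k, the number kπ/T is not an eigenvalue of A. Define C := f(A) by the continuous functional calculus applied to f(λ) = cos(λ T)². Then 1 is not an eigenvalue of C, i.e. the only x ∈ H with Cx = x is x = 0. -/
set_option maxHeartbeats 1000000

open Real
open scoped ComplexInnerProductSpace

private lemma abs_mul_le_abs_sin {θ : ℝ} (h : |θ| ≤ π / 2) :
    2 / π * |θ| ≤ |Real.sin θ| := by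
  rcases le_or_gt 0 θ with h0 | h0
  · rw [abs_of_nonneg h0]
    calc 2 / π * θ ≤ Real.sin θ := Real.mul_le_sin h0 (by rwa [abs_of_nonneg h0] at h)
    _ ≤ |Real.sin θ| := le_abs_self _
  · rw [abs_of_neg h0]
    have h1 := Real.mul_le_sin (x := -θ) (by linarith) (by rwa [abs_of_neg h0] at h)
    rw [Real.sin_neg] at h1
    calc 2 / π * -θ ≤ -Real.sin θ := by linarith
    _ ≤ |Real.sin θ| := neg_le_abs _

/-- The bump function: equals 1 within `δ` of `c`, vanishes beyond `2δ`. -/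
private noncomputable def bump (c δ lam : ℝ) : ℝ :=
  max 0 (1 - max 0 (|lam - c| - δ) / δ)

@[fun_prop]
private lemma bump_continuous (c δ : ℝ) : Continuous (bump c δ) := by
  unfold bump; fun_prop

private lemma bump_nonneg (c δ lam : ℝ) : 0 ≤ bump c δ lam := le_max_left _ _

private lemma bump_le_one {δ : ℝ} (hδ : 0 < δ) (c lam : ℝ) : bump c δ lam ≤ 1 := by
  unfold bump
  have h1 : 0 ≤ max 0 (|lam - c| - δ) / δ := by positivity
  apply max_le (by norm_num)
  linarith

private lemma bump_eq_zero {δ : ℝ} (hδ : 0 < δ) {c lam : ℝ} (h : 2 * δ ≤ |lam - c|) :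
    bump c δ lam = 0 := by
  unfold bump
  have h1 : δ ≤ max 0 (|lam - c| - δ) := le_max_of_le_right (by linarith)
  have h2 : (1 : ℝ) ≤ max 0 (|lam - c| - δ) / δ := (one_le_div hδ).2 h1
  rw [max_eq_left]; linarith

private lemma bump_eq_one {δ : ℝ} (hδ : 0 < δ) {c lam : ℝ} (h : |lam - c| ≤ δ) :
    bump c δ lam = 1 := by
  unfold bump
  have h1 : max 0 (|lam - c| - δ) = 0 := max_eq_left (by linarith)
  rw [h1, zero_div, sub_zero]
  exact max_eq_right (by norm_num)

/-- Key operator lemma: if `g(A)² x = 0` and `u² ≤ M g²` on the spectrum,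
then `u(A) x = 0`. -/
private lemma cfc_apply_eq_zero_of_sq_le
    {H : Type*} [NormedAddCommGroup H] [InnerProductSpace ℂ H] [CompleteSpace H]
    {A : H →L[ℂ] H} (hA : IsSelfAdjoint A) {g u : ℝ → ℝ}
    (hg : Continuous g) (hu : Continuous u) {M : ℝ}
    (hle : ∀ lam ∈ spectrum ℝ A, u lam ^ 2 ≤ M * g lam ^ 2)
    {x : H} (hx : (cfc (fun lam => g lam ^ 2) A) x = 0) :
    (cfc u A) x = 0 := by
  set B := cfc u A with hB
  have hBsa : IsSelfAdjoint B := cfc_predicate u A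
  have hadj : ContinuousLinearMap.adjoint B = B := by
    rw [← ContinuousLinearMap.star_eq_adjoint]; exact hBsa
  have hP : (0 : H →L[ℂ] H) ≤ cfc (fun lam => M * g lam ^ 2 - u lam ^ 2) A :=
    cfc_nonneg fun lam hlam => sub_nonneg.2 (hle lam hlam)
  have hPeq : cfc (fun lam => M * g lam ^ 2 - u lam ^ 2) A
      = M • cfc (fun lam => g lam ^ 2) A - B * B := by
    rw [cfc_sub _ _ A (by fun_prop) (by fun_prop),
      cfc_const_mul _ _ A (by fun_prop),
      cfc_pow u 2 A (by fun_prop), sq]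
  rw [hPeq, ContinuousLinearMap.nonneg_iff_isPositive] at hP
  have h2 := hP.inner_nonneg_right x
  have hApp : (M • cfc (fun lam => g lam ^ 2) A - B * B) x = -(B (B x)) := by
    simp [ContinuousLinearMap.sub_apply, ContinuousLinearMap.smul_apply,
      ContinuousLinearMap.mul_apply, hx]
  rw [hApp] at h2
  have hsym := (ContinuousLinearMap.isSelfAdjoint_iff_isSymmetric.mp hBsa)
  have h3 : RCLike.re (⟪x, -(B (B x))⟫) = -(‖B x‖ ^ 2) := by
    rw [inner_neg_right, map_neg]
    have h5 : (⟪x, B (B x)⟫ : ℂ) = ⟪B x, B x⟫ := (hsym x (B x)).symm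
    rw [h5, inner_self_eq_norm_sq]
  have h2 : 0 ≤ RCLike.re (⟪x, -(B (B x))⟫) := (Complex.nonneg_iff.mp h2).1
  rw [h3] at h2
  have h4 : ‖B x‖ = 0 := by nlinarith [norm_nonneg (B x)]
  simpa using norm_eq_zero.mp h4

/-- Let `A` be a self-adjoint bounded operator on a complex
Hilbert space, `T > 0`, and assume that for every integer `k`, the number
`kπ/T` is not an eigenvalue of `A`. Then `1` is not an eigenvalue of
`C = cos(AT)²` (continuous functional calculus applied to `λ ↦ cos(λT)²`):
the only `x` with `C x = x` is `x = 0`. -/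
theorem one_not_eigenvalue_cos_sq_cfc
    {H : Type*} [NormedAddCommGroup H] [InnerProductSpace ℂ H] [CompleteSpace H]
    (A : H →L[ℂ] H) (hA : IsSelfAdjoint A) (T : ℝ) (hT : 0 < T)
    (heig : ∀ k : ℤ, ∀ x : H, A x = ((((k : ℝ) * Real.pi / T : ℝ) : ℂ)) • x → x = 0) :
    ∀ x : H, (cfc (fun lam : ℝ => Real.cos (lam * T) ^ 2) A) x = x → x = 0 := by
  intro x hx
  rcases subsingleton_or_nontrivial H with hH | hH
  · exact Subsingleton.elim x 0
  have hπ := Real.pi_pos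
  set δ : ℝ := π / (8 * T) with hδ
  have hδpos : 0 < δ := by positivity
  set μ : ℤ → ℝ := fun k => (k : ℝ) * π / T with hμ
  -- separation of the points μ k
  have hsep : ∀ j k : ℤ, j ≠ k → 8 * δ ≤ |μ j - μ k| := by
    intro j k hjk
    have h1 : (1 : ℝ) ≤ |(j : ℝ) - (k : ℝ)| := by
      have := Int.one_le_abs (sub_ne_zero.2 hjk)
      push_cast [← Int.cast_abs]
      exact_mod_cast this
    have h2 : μ j - μ k = ((j : ℝ) - k) * (π / T) := by simp only [hμ]; ring
    have h3 : 8 * δ = π / T := by rw [hδ]; field_simp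
    rw [h2, abs_mul, abs_of_pos (by positivity : (0:ℝ) < π / T), h3]
    nlinarith
  -- lower bound for |sin| near the zeros
  have hsinlow : ∀ (lam : ℝ) (k : ℤ), |lam - μ k| ≤ 2 * δ →
      2 / π * (|lam - μ k| * T) ≤ |Real.sin (lam * T)| := by
    intro lam k hlk
    have hθeq : lam * T = (lam - μ k) * T + (k : ℝ) * π := by
      simp only [hμ]; field_simp; ring
    have habs : |(lam - μ k) * T| ≤ π / 2 := by
      rw [abs_mul, abs_of_pos hT]
      have h2δ : 2 * δ * T = π / 4 := by rw [hδ]; field_simp; ring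
      nlinarith
    have h1 := abs_mul_le_abs_sin habs
    have h2 : |Real.sin (lam * T)| = |Real.sin ((lam - μ k) * T)| := by
      rw [hθeq, Real.sin_add_int_mul_pi]
      rcases Int.even_or_odd k with he | ho
      · rw [he.neg_one_zpow, one_mul]
      · rw [ho.neg_one_zpow]
        rw [neg_mul, one_mul, abs_neg]
    calc 2 / π * (|lam - μ k| * T) = 2 / π * |(lam - μ k) * T| := by
          rw [abs_mul, abs_of_pos hT]
    _ ≤ |Real.sin ((lam - μ k) * T)| := h1
    _ = |Real.sin (lam * T)| := h2.symm
  -- the index set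
  set N : ℕ := ⌈‖A‖ * T / π⌉₊ + 1 with hN
  set I : Finset ℤ := Finset.Icc (-(N : ℤ)) (N : ℤ) with hI
  have hspec_norm : ∀ lam ∈ spectrum ℝ A, |lam| ≤ ‖A‖ := by
    intro lam hlam
    simpa [Real.norm_eq_abs] using spectrum.norm_le_norm_of_mem hlam
  have hmem : ∀ (k : ℤ) (lam : ℝ), lam ∈ spectrum ℝ A → |lam - μ k| ≤ δ → k ∈ I := by
    intro k lam hlam hclose
    have h0 := hspec_norm lam hlam
    have h1 : |μ k| ≤ ‖A‖ + δ := by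
      calc |μ k| = |(μ k - lam) + lam| := by ring_nf
      _ ≤ |μ k - lam| + |lam| := abs_add_le _ _
      _ = |lam - μ k| + |lam| := by rw [abs_sub_comm]
      _ ≤ δ + ‖A‖ := add_le_add hclose h0
      _ = ‖A‖ + δ := by ring
    have h2 : |(k : ℝ)| * (π / T) ≤ ‖A‖ + δ := by
      have heq : |μ k| = |(k : ℝ)| * (π / T) := by
        simp only [hμ]
        rw [show (k : ℝ) * π / T = (k : ℝ) * (π / T) by ring, abs_mul,
          abs_of_pos (by positivity : (0:ℝ) < π / T)]
      rw [← heq]; exact h1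
    have hπT : (0 : ℝ) < π / T := by positivity
    have h3 : |(k : ℝ)| ≤ (‖A‖ + δ) / (π / T) := (le_div_iff₀ hπT).2 h2
    have h4 : (‖A‖ + δ) / (π / T) = ‖A‖ * T / π + 1 / 8 := by
      rw [hδ]; field_simp
    have h5 : (‖A‖ * T / π + 1 / 8 : ℝ) ≤ (N : ℝ) := by
      have hc := Nat.le_ceil (‖A‖ * T / π)
      have : (N : ℝ) = (⌈‖A‖ * T / π⌉₊ : ℝ) + 1 := by rw [hN]; push_cast; ring
      rw [this]; linarith
    have h6 : |(k : ℝ)| ≤ (N : ℝ) := by rw [h4] at h3; linarith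
    have h7 : |k| ≤ (N : ℤ) := by
      rw [← Int.cast_abs] at h6
      exact_mod_cast h6
    rw [hI, Finset.mem_Icc]
    exact abs_le.mp h7
  -- the partition-of-unity sum
  set S : ℝ → ℝ := fun lam => ∑ j ∈ I, bump (μ j) δ lam with hS
  have hScont : Continuous S := by
    apply continuous_finset_sum; intro j _; exact bump_continuous _ _
  have hS_nonneg : ∀ lam, 0 ≤ S lam :=
    fun lam => Finset.sum_nonneg fun j _ => bump_nonneg _ _ _
  have hsupp : ∀ (k : ℤ) (lam : ℝ), bump (μ k) δ lam ≠ 0 → |lam - μ k| < 2 * δ := by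
    intro k lam hne
    by_contra hcon
    push_neg at hcon
    exact hne (bump_eq_zero hδpos hcon)
  have hS_single : ∀ (lam : ℝ) (k : ℤ), k ∈ I → bump (μ k) δ lam ≠ 0 →
      S lam = bump (μ k) δ lam := by
    intro lam k hk hkne
    refine Finset.sum_eq_single_of_mem k hk fun j hj hjk => ?_
    have hd := hsep j k hjk
    have hlk := hsupp k lam hkne
    apply bump_eq_zero hδpos
    have htri : |μ j - μ k| ≤ |lam - μ j| + |lam - μ k| := by
      calc |μ j - μ k| = |(μ j - lam) + (lam - μ k)| := by ring_nf
      _ ≤ |μ j - lam| + |lam - μ k| := abs_add_le _ _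
      _ = |lam - μ j| + |lam - μ k| := by rw [abs_sub_comm]
    linarith
  have hS_le_one : ∀ lam, S lam ≤ 1 := by
    intro lam
    by_cases hall : ∀ j ∈ I, bump (μ j) δ lam = 0
    · have : S lam = 0 := Finset.sum_eq_zero hall
      linarith
    · push_neg at hall
      obtain ⟨k, hk, hkne⟩ := hall
      rw [hS_single lam k hk hkne]
      exact bump_le_one hδpos _ _
  have hS_eq_one : ∀ (lam : ℝ) (k : ℤ), k ∈ I → |lam - μ k| ≤ δ → S lam = 1 := by
    intro lam k hk hclose
    rw [hS_single lam k hk (by rw [bump_eq_one hδpos hclose]; norm_num)]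
    exact bump_eq_one hδpos hclose
  -- pointwise inequality for the bump pieces
  have hM1 : ∀ (k : ℤ) (lam : ℝ),
      ((lam - μ k) * bump (μ k) δ lam) ^ 2 ≤ (π / (2 * T)) ^ 2 * Real.sin (lam * T) ^ 2 := by
    intro k lam
    by_cases hz : bump (μ k) δ lam = 0
    · rw [hz, mul_zero]
      nlinarith [sq_nonneg (Real.sin (lam * T)), sq_nonneg (π / (2 * T)),
        mul_nonneg (sq_nonneg (π / (2 * T))) (sq_nonneg (Real.sin (lam * T)))]
    · have hlt := hsupp k lam hz
      have hs := hsinlow lam k hlt.le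
      have h1 : |(lam - μ k) * bump (μ k) δ lam| ≤ |lam - μ k| := by
        rw [abs_mul]
        refine mul_le_of_le_one_right (abs_nonneg _) ?_
        rw [abs_of_nonneg (bump_nonneg _ _ _)]
        exact bump_le_one hδpos _ _
      have h2 : |lam - μ k| ≤ π / (2 * T) * |Real.sin (lam * T)| := by
        have h4 := mul_le_mul_of_nonneg_left hs (by positivity : (0:ℝ) ≤ π / (2 * T))
        calc |lam - μ k| = π / (2 * T) * (2 / π * (|lam - μ k| * T)) := by
              field_simp
        _ ≤ π / (2 * T) * |Real.sin (lam * T)| := h4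
      calc ((lam - μ k) * bump (μ k) δ lam) ^ 2
          = |(lam - μ k) * bump (μ k) δ lam| ^ 2 := (sq_abs _).symm
      _ ≤ (π / (2 * T) * |Real.sin (lam * T)|) ^ 2 := by
          apply pow_le_pow_left₀ (abs_nonneg _) (h1.trans h2)
      _ = (π / (2 * T)) ^ 2 * Real.sin (lam * T) ^ 2 := by rw [mul_pow, sq_abs]
  -- pointwise inequality for the remainder
  have hM2 : ∀ lam ∈ spectrum ℝ A, (1 - S lam) ^ 2 ≤ 16 * Real.sin (lam * T) ^ 2 := by
    intro lam hlam
    by_cases hbig : 1 / 4 ≤ |Real.sin (lam * T)|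
    · have h0 := hS_nonneg lam
      have h1 := hS_le_one lam
      have hss := sq_abs (Real.sin (lam * T))
      nlinarith
    · push_neg at hbig
      set k := round (lam * T / π) with hk
      have h1 : |lam * T / π - (k : ℝ)| ≤ 1 / 2 := abs_sub_round _
      have hθ : |lam * T - (k : ℝ) * π| ≤ π / 2 := by
        have heq : lam * T - (k : ℝ) * π = π * (lam * T / π - (k : ℝ)) := by
          field_simp
          try ring
        rw [heq, abs_mul, abs_of_pos hπ]
        nlinarith
      have hsin : 2 / π * |lam * T - (k : ℝ) * π| ≤ |Real.sin (lam * T)| := by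
        have h2 := abs_mul_le_abs_sin hθ
        have h3 : |Real.sin (lam * T)| = |Real.sin (lam * T - (k : ℝ) * π)| := by
          conv_lhs => rw [show lam * T = (lam * T - (k : ℝ) * π) + (k : ℝ) * π by ring,
            Real.sin_add_int_mul_pi]
          rcases Int.even_or_odd k with he | ho
          · rw [he.neg_one_zpow, one_mul]
          · rw [ho.neg_one_zpow, neg_mul, one_mul, abs_neg]
        rw [h3]; exact h2
      have h4 : |lam * T - (k : ℝ) * π| < π / 8 := by
        have hx1 := mul_le_mul_of_nonneg_left hsin hπ.le
        have hx2 : π * (2 / π * |lam * T - (k : ℝ) * π|) = 2 * |lam * T - (k : ℝ) * π| := by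
          field_simp
        nlinarith
      have h5 : |lam - μ k| ≤ δ := by
        have heq2 : lam - μ k = (lam * T - (k : ℝ) * π) / T := by
          simp only [hμ]; field_simp
        rw [heq2, abs_div, abs_of_pos hT, hδ]
        rw [div_le_div_iff₀ hT (by positivity)]
        nlinarith
      have hkI : k ∈ I := hmem k lam hlam h5
      rw [hS_eq_one lam k hkI h5, sub_self]
      nlinarith [sq_nonneg (Real.sin (lam * T))]
  -- the function sin(λT)² applied to A kills x
  have hsin0 : (cfc (fun lam : ℝ => Real.sin (lam * T) ^ 2) A) x = 0 := by
    have h1 : cfc (fun lam : ℝ => Real.sin (lam * T) ^ 2) A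
        = cfc (fun lam : ℝ => 1 - Real.cos (lam * T) ^ 2) A :=
      cfc_congr fun lam _ => by rw [Real.sin_sq]
    rw [h1, cfc_sub _ _ A (by fun_prop) (by fun_prop), cfc_const 1 A, map_one]
    simp [ContinuousLinearMap.sub_apply, hx]
  -- each bump piece applied to x vanishes
  have hker : ∀ k : ℤ, (cfc (bump (μ k) δ) A) x = 0 := by
    intro k
    have h1 : (cfc (fun lam => (lam - μ k) * bump (μ k) δ lam) A) x = 0 :=
      cfc_apply_eq_zero_of_sq_le hA (g := fun lam => Real.sin (lam * T))
        (by fun_prop) (by fun_prop) (fun lam _ => hM1 k lam) hsin0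
    have h2 : cfc (fun lam => (lam - μ k) * bump (μ k) δ lam) A
        = (A - algebraMap ℝ (H →L[ℂ] H) (μ k)) * cfc (bump (μ k) δ) A := by
      rw [cfc_mul _ _ A (by fun_prop) (by fun_prop)]
      congr 1
      rw [cfc_sub _ _ A (by fun_prop) (by fun_prop), cfc_id' (R := ℝ) A,
        cfc_const _ A]
    rw [h2] at h1
    simp only [ContinuousLinearMap.mul_apply, ContinuousLinearMap.sub_apply,
      Algebra.algebraMap_eq_smul_one, ContinuousLinearMap.smul_apply,
      ContinuousLinearMap.one_apply] at h1
    have h3 : A ((cfc (bump (μ k) δ) A) x)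
        = ((μ k : ℝ) : ℂ) • ((cfc (bump (μ k) δ) A) x) := by
      rw [Complex.coe_smul]
      exact sub_eq_zero.mp h1
    exact heig k _ h3
  -- the remainder applied to x vanishes
  have hrem : (cfc (fun lam => 1 - S lam) A) x = 0 :=
    cfc_apply_eq_zero_of_sq_le hA (g := fun lam => Real.sin (lam * T))
      (by fun_prop) (by fun_prop) hM2 hsin0
  -- assemble
  have hone : cfc (fun lam : ℝ => (1 - S lam) + S lam) A = 1 := by
    rw [cfc_congr (g := fun _ : ℝ => (1 : ℝ)) fun lam _ => by ring,
      cfc_const 1 A, map_one]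
  have hsplit : cfc (fun lam : ℝ => (1 - S lam) + S lam) A
      = cfc (fun lam => 1 - S lam) A + cfc S A :=
    cfc_add (a := A) _ _ (by fun_prop) (by fun_prop)
  have hSsum : cfc S A = ∑ k ∈ I, cfc (bump (μ k) δ) A := by
    have hfun : S = ∑ j ∈ I, (fun lam => bump (μ j) δ lam) := by
      funext lam
      simp [hS]
    rw [hfun]
    exact cfc_sum (fun j lam => bump (μ j) δ lam) A I
      fun j _ => (bump_continuous _ _).continuousOn
  have : x = (cfc (fun lam => 1 - S lam) A) x + ∑ k ∈ I, (cfc (bump (μ k) δ) A) x := by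
    conv_lhs => rw [show x = (1 : H →L[ℂ] H) x from rfl, ← hone, hsplit]
    rw [ContinuousLinearMap.add_apply, hSsum, ContinuousLinearMap.sum_apply]
  rw [hrem, Finset.sum_congr rfl fun k _ => hker k] at this
  simpa using this
end
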